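/- Under the setup of the dissipative spin system (v̇ᵢ = σᵢ × vᵢ, σ̇ᵢ = (J nᵢ vᵢ × w − αᵢ σᵢ × vᵢ)/v² − η σᵢ, w = (1/N)Σⱼ nⱼvⱼ, |vᵢ| = v, vᵢ·σᵢ = 0, nᵢ, η, J > 0), if the initial energy satisfies E(0) < J m²/(2N) with m = Σᵢ nᵢ, then |w(t)|² ≥ |w(0)|² − (v²/(JN)) Σᵢ |σᵢ(0)|² > 0 for all t ≥ 0; in particular |w(t)| is bounded below by a positive constant uniformly in time. -/

import Mathlib

open Matrix MeasureTheory

def dot3 (u w : Fin 3 → ℝ) : ℝ := ∑ i, u i * w i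

noncomputable def norm3 (u : Fin 3 → ℝ) : ℝ := Real.sqrt (dot3 u u)

lemma dot3_comm (u w : Fin 3 → ℝ) : dot3 u w = dot3 w u := by
  simp [dot3, mul_comm]

lemma dot3_smul_left (c : ℝ) (u y : Fin 3 → ℝ) : dot3 (c • u) y = c * dot3 u y := by
  simp [dot3, Finset.mul_sum, mul_assoc]

lemma dot3_sub_left (u v y : Fin 3 → ℝ) : dot3 (u - v) y = dot3 u y - dot3 v y := by
  simp [dot3, sub_mul, Finset.sum_sub_distrib]

lemma dot3_sum_left {ι : Type*} (s : Finset ι) (u : ι → Fin 3 → ℝ) (y : Fin 3 → ℝ) :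
    dot3 (∑ i ∈ s, u i) y = ∑ i ∈ s, dot3 (u i) y := by
  simp [dot3, Finset.sum_mul]
  exact Finset.sum_comm

lemma dot3_nonneg (u : Fin 3 → ℝ) : 0 ≤ dot3 u u :=
  Finset.sum_nonneg fun i _ => mul_self_nonneg _

lemma dot3_sub_sub (a b : Fin 3 → ℝ) :
    dot3 (a - b) (a - b) = dot3 a a + dot3 b b - 2 * dot3 a b := by
  simp only [dot3, Pi.sub_apply, Finset.mul_sum, ← Finset.sum_add_distrib,
    ← Finset.sum_sub_distrib]
  exact Finset.sum_congr rfl fun i _ => by ring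

lemma hasDerivAt_dot3 {f g : ℝ → Fin 3 → ℝ} {f' g' : Fin 3 → ℝ} {t : ℝ}
    (hf : HasDerivAt f f' t) (hg : HasDerivAt g g' t) :
    HasDerivAt (fun s => dot3 (f s) (g s)) (dot3 f' (g t) + dot3 (f t) g') t := by
  have h := HasDerivAt.sum (u := Finset.univ)
    (A := fun i s => f s i * g s i) (A' := fun i => f' i * g t i + f t i * g' i)
    (fun i _ => (hasDerivAt_pi.1 hf i).mul (hasDerivAt_pi.1 hg i))
  simpa [dot3, Finset.sum_add_distrib, Finset.sum_fn] using h

lemma dot3_cross_self_right (a b : Fin 3 → ℝ) : dot3 (a ⨯₃ b) a = 0 := by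
  rw [dot3_comm]; exact dot_self_cross a b

lemma dot3_triple (a b c : Fin 3 → ℝ) : dot3 (b ⨯₃ c) a = dot3 (a ⨯₃ b) c := by
  have h1 := triple_product_permutation a b c
  have h2 := triple_product_permutation c a b
  rw [dot3_comm (b ⨯₃ c) a, dot3_comm (a ⨯₃ b) c]
  show a ⬝ᵥ b ⨯₃ c = c ⬝ᵥ a ⨯₃ b
  exact h2.symm


/-- If the initial energy of the dissipative inertial spin system satisfies
`E(0) < J m²/(2N)` with `m = Σᵢ nᵢ`, then for all `t ≥ 0`
`|w(t)|² ≥ |w(0)|² − (v²/(JN)) Σᵢ|σᵢ(0)|² > 0`; in particular `|w(t)|` is bounded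
below by a positive constant uniformly in time. -/
theorem mean_velocity_lower_bound
    (N : ℕ) (hN : 0 < N) (v0 J η : ℝ) (hv0 : 0 < v0) (hJ : 0 < J) (hη : 0 < η)
    (n : Fin N → ℝ) (hn : ∀ i, 0 < n i) (α : Fin N → ℝ)
    (v σ : Fin N → ℝ → Fin 3 → ℝ)
    (w : ℝ → Fin 3 → ℝ) (hw : ∀ t, w t = (N : ℝ)⁻¹ • ∑ i, n i • v i t)
    (hode_v : ∀ i t, HasDerivAt (v i) (σ i t ⨯₃ v i t) t)
    (hode_σ : ∀ i t, HasDerivAt (σ i)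
      ((v0 ^ 2)⁻¹ • ((J * n i) • (v i t ⨯₃ w t) - α i • (σ i t ⨯₃ v i t))
        - η • σ i t) t)
    (hsphere : ∀ i t, dot3 (v i t) (v i t) = v0 ^ 2)
    (horth : ∀ i t, dot3 (v i t) (σ i t) = 0)
    (U : ℝ → ℝ)
    (hU : ∀ t, U t = J / (4 * N * v0 ^ 2) *
        ∑ i, ∑ j, n i * n j * dot3 (v i t - v j t) (v i t - v j t))
    (E : ℝ → ℝ)
    (hE : ∀ t, E t = (1 / 2) * ∑ i, dot3 (σ i t) (σ i t) + U t)
    (hE0 : E 0 < J * (∑ i, n i) ^ 2 / (2 * N)) :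
    (0 < dot3 (w 0) (w 0) - v0 ^ 2 / (J * N) * ∑ i, dot3 (σ i 0) (σ i 0)) ∧
    (∀ t, 0 ≤ t →
      dot3 (w t) (w t) ≥
        dot3 (w 0) (w 0) - v0 ^ 2 / (J * N) * ∑ i, dot3 (σ i 0) (σ i 0)) := by
  have hNR : (0:ℝ) < N := by exact_mod_cast hN
  have hNne : (N:ℝ) ≠ 0 := ne_of_gt hNR
  have hvne : v0 ≠ 0 := ne_of_gt hv0
  set m : ℝ := ∑ i, n i with hm
  set S : ℝ → ℝ := fun t => ∑ i, dot3 (σ i t) (σ i t) with hS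
  set W : ℝ → ℝ := fun t => dot3 (w t) (w t) with hWdef
  set K : ℝ := J * m ^ 2 / (2 * N) with hK
  set c : ℝ := J * N / (2 * v0 ^ 2) with hc
  have hcpos : 0 < c := by positivity
  -- W in terms of the double sum
  have hWt : ∀ t, ((N:ℝ))^2 * W t = ∑ i, ∑ j, n i * n j * dot3 (v i t) (v j t) := by
    intro t
    have : W t = dot3 ((N : ℝ)⁻¹ • ∑ i, n i • v i t) ((N : ℝ)⁻¹ • ∑ i, n i • v i t) := by
      simp [hWdef, hw t]
    rw [this, dot3_smul_left, dot3_comm, dot3_smul_left, dot3_sum_left]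
    have hinner : ∀ j : Fin N,
        dot3 (n j • v j t) (∑ i, n i • v i t) = ∑ i, n j * n i * dot3 (v j t) (v i t) := by
      intro j
      rw [dot3_smul_left, dot3_comm, dot3_sum_left, Finset.mul_sum]
      exact Finset.sum_congr rfl fun i _ => by
        rw [dot3_smul_left, dot3_comm]; ring
    rw [Finset.sum_congr rfl fun j _ => hinner j]
    field_simp
  -- key energy identity
  have key : ∀ t, E t = (1/2) * S t + K - c * W t := by
    intro t
    have hdsum : ∑ i, ∑ j, n i * n j * dot3 (v i t - v j t) (v i t - v j t)
        = 2 * v0 ^ 2 * m ^ 2 - 2 * ((N:ℝ)^2 * W t) := by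
      rw [hWt t]
      have : ∀ i j : Fin N, n i * n j * dot3 (v i t - v j t) (v i t - v j t)
          = 2 * v0 ^ 2 * (n i * n j) - 2 * (n i * n j * dot3 (v i t) (v j t)) := by
        intro i j
        rw [dot3_sub_sub, hsphere i t, hsphere j t]; ring
      rw [Finset.sum_congr rfl fun i _ => Finset.sum_congr rfl fun j _ => this i j]
      simp only [Finset.sum_sub_distrib, ← Finset.mul_sum, ← Finset.sum_mul]
      rw [hm]
      ring
    rw [hE t, hU t, hdsum, hK, hc, hS]
    field_simp
    ring
  -- derivative of w
  have hw' : ∀ t, HasDerivAt w ((N : ℝ)⁻¹ • ∑ i, n i • (σ i t ⨯₃ v i t)) t := by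
    intro t
    have hwfun : w = fun t => (N : ℝ)⁻¹ • ∑ i, n i • v i t := funext hw
    rw [hwfun]
    exact (HasDerivAt.fun_sum fun i _ => (hode_v i t).const_smul (n i)).const_smul ((N : ℝ)⁻¹)
  -- derivative of E
  have hE' : ∀ t, HasDerivAt E (-η * S t) t := by
    intro t
    have hEfun : E = fun t => (1/2) * S t + K - c * W t := funext key
    rw [hEfun]
    set σ' : Fin N → Fin 3 → ℝ := fun i =>
      (v0 ^ 2)⁻¹ • ((J * n i) • (v i t ⨯₃ w t) - α i • (σ i t ⨯₃ v i t)) - η • σ i t with hσ'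
    set w' : Fin 3 → ℝ := (N : ℝ)⁻¹ • ∑ i, n i • (σ i t ⨯₃ v i t) with hwd
    have hSder : HasDerivAt S (∑ i, (dot3 (σ' i) (σ i t) + dot3 (σ i t) (σ' i))) t :=
      HasDerivAt.fun_sum fun i _ => hasDerivAt_dot3 (hode_σ i t) (hode_σ i t)
    have hWder : HasDerivAt W (dot3 w' (w t) + dot3 (w t) w') t :=
      hasDerivAt_dot3 (hw' t) (hw' t)
    have h := ((hSder.const_mul (1/2:ℝ)).add_const K).sub (hWder.const_mul c)
    set P : ℝ := ∑ i, n i * dot3 (σ i t ⨯₃ v i t) (w t) with hP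
    have hone : ∀ i, dot3 (σ' i) (σ i t)
        = (J / v0 ^ 2) * (n i * dot3 (σ i t ⨯₃ v i t) (w t)) - η * dot3 (σ i t) (σ i t) := by
      intro i
      simp only [hσ']
      simp only [dot3_sub_left, dot3_smul_left]
      rw [dot3_cross_self_right, dot3_triple (σ i t) (v i t) (w t)]
      ring
    have hw2 : dot3 w' (w t) = (N : ℝ)⁻¹ * P := by
      rw [hwd, dot3_smul_left, dot3_sum_left]
      rw [Finset.sum_congr rfl fun i _ => dot3_smul_left (n i) (σ i t ⨯₃ v i t) (w t)]
    have hsum1 : ∑ i, (dot3 (σ' i) (σ i t) + dot3 (σ i t) (σ' i))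
        = 2 * ((J / v0 ^ 2) * P - η * S t) := by
      have hper : ∀ i, dot3 (σ' i) (σ i t) + dot3 (σ i t) (σ' i)
          = (2 * (J / v0 ^ 2)) * (n i * dot3 (σ i t ⨯₃ v i t) (w t))
            - (2 * η) * dot3 (σ i t) (σ i t) := by
        intro i
        rw [dot3_comm (σ i t) (σ' i), hone i]; ring
      rw [Finset.sum_congr rfl fun i _ => hper i, Finset.sum_sub_distrib,
        ← Finset.mul_sum, ← Finset.mul_sum, hP, hS]
      ring
    have hsum2 : dot3 w' (w t) + dot3 (w t) w' = 2 * ((N:ℝ)⁻¹ * P) := by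
      rw [dot3_comm (w t) w', hw2]; ring
    have hder_eq : (1/2 : ℝ) * (∑ i, (dot3 (σ' i) (σ i t) + dot3 (σ i t) (σ' i)))
        - c * (dot3 w' (w t) + dot3 (w t) w') = -η * S t := by
      rw [hsum1, hsum2, hc]
      field_simp
      ring
    rw [← hder_eq]
    exact h
  -- E is nonincreasing
  have hmono : ∀ t, 0 ≤ t → E t ≤ E 0 := by
    intro t ht
    have hdiff : Differentiable ℝ E := fun x => (hE' x).differentiableAt
    have hder : ∀ x, deriv E x ≤ 0 := by
      intro x
      rw [(hE' x).deriv]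
      have := dot3_nonneg (w x)
      have hSx : 0 ≤ S x := Finset.sum_nonneg fun i _ => dot3_nonneg _
      nlinarith
    exact antitone_of_deriv_nonpos hdiff hder ht
  -- conclusion
  have hS0 : S 0 = ∑ i, dot3 (σ i 0) (σ i 0) := rfl
  have hW0 : W 0 = dot3 (w 0) (w 0) := rfl
  have hL : W 0 - v0 ^ 2 / (J * N) * S 0 = (K - E 0) / c := by
    rw [key 0, hc]
    field_simp
    ring
  have hKE : 0 < K - E 0 := by
    rw [hK]
    linarith [hE0]
  constructor
  · show 0 < W 0 - v0 ^ 2 / (J * N) * S 0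
    rw [hL]
    exact div_pos hKE hcpos
  · intro t ht
    show W t ≥ W 0 - v0 ^ 2 / (J * N) * S 0
    rw [hL, ge_iff_le, div_le_iff₀ hcpos]
    have ht1 := key t
    have hSt : 0 ≤ S t := Finset.sum_nonneg fun i _ => dot3_nonneg _
    have hEt := hmono t ht
    nlinarith
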